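/- arXiv:1703.09619 — 2 statements merged into one kernel-verified Lean document; each statement's English description precedes it below -/
import Mathlib

section
/- For all natural numbers m₁ and m₂ with m₁ + m₂ even, and for every real x with x ≠ ±1, U_{m₁}(x)·U_{m₂}(x) = T^{ns}_{|m₁−m₂|}(x) − T^{ns}_{m₁+m₂+2}(x), where T^{ns}_n(x) = (T_n(x)−1)/(2(1−x²)) for even n. -/
open Polynomial Polynomial.Chebyshev

theorem mul_U_base (R : Type*) [CommRing R] (m : ℤ) :
    2 * (1 - X ^ 2) * U R m = T R m - T R (m + 2) := by
  have h₁ := one_sub_X_sq_mul_U_eq_pol_in_T R m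
  have h₂ := T_mul_T R (m + 1) 1
  rw [T_one] at h₂
  linear_combination (norm := ring_nf) 2 * h₁ + h₂

theorem mul_U_aux (R : Type*) [CommRing R] (m k : ℤ) :
    2 * (1 - X ^ 2) * U R m * U R k = T R (m - k) - T R (m + k + 2) := by
  induction k using Polynomial.Chebyshev.induct with
  | zero =>
    simpa using mul_U_base R m
  | one =>
    have aux0 := mul_U_base R m
    have h₂ := T_mul_T R m 1
    have h₃ := T_mul_T R (m + 2) 1
    have h₄ := U_one R
    rw [T_one] at h₂ h₃
    linear_combination (norm := ring_nf)
      2 * (X : R[X]) * aux0 + h₂ - h₃ + 2 * (1 - (X : R[X]) ^ 2) * U R m * h₄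
  | add_two k ih1 ih2 =>
    have h₁ := U_add_two R k
    have h₂ := T_mul_T R (m - k - 1) 1
    have h₃ := T_mul_T R (m + k + 3) 1
    rw [T_one] at h₂ h₃
    linear_combination (norm := ring_nf)
      2 * (1 - (X : R[X]) ^ 2) * U R m * h₁ + 2 * (X : R[X]) * ih1 - ih2 + h₂ - h₃
  | neg_add_one k ih1 ih2 =>
    have h₁ := U_add_two R (-k - 1)
    have h₂ := T_mul_T R (m + k) 1
    have h₃ := T_mul_T R (m - k + 2) 1
    rw [T_one] at h₂ h₃
    linear_combination (norm := ring_nf)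
      2 * (1 - (X : R[X]) ^ 2) * U R m * h₁ + 2 * (X : R[X]) * ih1 - ih2 + h₂ - h₃

/-- Nonsingular Chebyshev function for even index. -/
noncomputable def TnsEven (n : ℤ) (x : ℝ) : ℝ :=
  ((T ℝ n).eval x - 1) / (2 * (1 - x ^ 2))

theorem U_product_eq_Tns_even (m₁ m₂ : ℕ) (h : Even (m₁ + m₂)) (x : ℝ)
    (hx1 : x ≠ 1) (hx2 : x ≠ -1) :
    (U ℝ m₁).eval x * (U ℝ m₂).eval x =
      TnsEven |(m₁ : ℤ) - m₂| x - TnsEven ((m₁ : ℤ) + m₂ + 2) x := by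
  have habs : T ℝ |(m₁ : ℤ) - m₂| = T ℝ ((m₁ : ℤ) - m₂) := by
    rcases abs_cases ((m₁ : ℤ) - m₂) with ⟨h1, _⟩ | ⟨h1, _⟩
    · rw [h1]
    · rw [h1, T_neg]
  have hden : (2 : ℝ) * (1 - x ^ 2) ≠ 0 := by
    intro hc
    have h1 : (1 - x) * (1 + x) = 0 := by nlinarith [hc]
    rcases mul_eq_zero.1 h1 with h' | h'
    · exact hx1 (by linarith)
    · exact hx2 (by linarith)
  have key := congrArg (Polynomial.eval x) (mul_U_aux ℝ m₁ m₂)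
  simp only [Polynomial.eval_sub, Polynomial.eval_mul, Polynomial.eval_pow,
    Polynomial.eval_ofNat, Polynomial.eval_one, Polynomial.eval_X] at key
  rw [TnsEven, TnsEven, habs, div_sub_div_same, eq_div_iff hden]
  linear_combination key
end

section
/- For any natural numbers m₁, m₂, the product U_{m₁}(x)·U_{m₂}(x), as a polynomial, equals the sum ∑_{j=0}^{min(m₁,m₂)} U_{m₁+m₂−2j}(x) (the Clebsch–Gordan-type linearization of Chebyshev polynomials of the second kind). -/
open Polynomial Polynomial.Chebyshev

private lemma U_aux : ∀ (a : ℕ) (b : ℤ),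
    U ℝ (a : ℤ) * U ℝ b = U ℝ ((a : ℤ) - 1) * U ℝ (b + 1) + U ℝ (b - a) := by
  intro a
  induction a using Nat.twoStepInduction with
  | zero => intro b; simp [U_neg_one]
  | one =>
    intro b
    have h := U_add_one ℝ b
    simp only [Nat.cast_one, sub_self, U_zero, U_one]
    linear_combination -h
  | more a ih1 ih2 =>
    intro b
    have h1 := ih2 b
    have r1 := U_add_two ℝ (a : ℤ)
    have r2 := U_sub_two ℝ (b - a)
    have r3 := U_add_one ℝ (a : ℤ)
    push_cast at h1 ih1 ⊢
    rw [show ((a : ℤ) + 1 - 1) = (a : ℤ) from by ring,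
      show (b - ((a : ℤ) + 1)) = b - a - 1 from by ring] at h1
    calc U ℝ ((a : ℤ) + 2) * U ℝ b
        = 2 * X * (U ℝ ((a:ℤ) + 1) * U ℝ b) - U ℝ (a:ℤ) * U ℝ b := by rw [r1]; ring
      _ = 2 * X * (U ℝ (a:ℤ) * U ℝ (b+1) + U ℝ (b - a - 1))
            - (U ℝ ((a:ℤ)-1) * U ℝ (b+1) + U ℝ (b - a)) := by
              linear_combination (2 * (X:ℝ[X])) * h1 - ih1 b
      _ = (2 * X * U ℝ ((a:ℤ)) - U ℝ ((a:ℤ)-1)) * U ℝ (b+1)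
            + (2 * X * U ℝ (b - a - 1) - U ℝ (b - a)) := by ring
      _ = U ℝ ((a : ℤ) + 2 - 1) * U ℝ (b + 1) + U ℝ (b - ((a:ℤ) + 2)) := by
            rw [show (b : ℤ) - ((a:ℤ) + 2) = (b - a) - 2 from by ring, r2,
              show ((a : ℤ) + 2 - 1) = (a : ℤ) + 1 from by ring, r3]

private lemma U_key : ∀ (m n : ℕ), m ≤ n →
    U ℝ (m : ℤ) * U ℝ (n : ℤ) =
      ∑ j ∈ Finset.range (m + 1), U ℝ ((m : ℤ) + n - 2 * j) := by
  intro m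
  induction m with
  | zero => intro n _; simp
  | succ m ih =>
    intro n hn
    have h := U_aux (m + 1) (n : ℤ)
    have ih' := ih (n + 1) (by omega)
    push_cast at h ih' ⊢
    rw [Finset.sum_range_succ]
    rw [show ((m : ℤ) + 1 - 1) = (m : ℤ) by ring] at h
    rw [h, ih']
    congr 1
    · apply Finset.sum_congr rfl
      intro j _
      congr 1
      ring
    · congr 1
      push_cast
      ring

theorem U_mul_U_eq_sum (m₁ m₂ : ℕ) :
    U ℝ m₁ * U ℝ m₂ =
      ∑ j ∈ Finset.range (min m₁ m₂ + 1), U ℝ ((m₁ : ℤ) + m₂ - 2 * j) := by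
  rcases le_total m₁ m₂ with h | h
  · rw [min_eq_left h]; exact U_key m₁ m₂ h
  · rw [min_eq_right h, mul_comm]
    rw [U_key m₂ m₁ h]
    apply Finset.sum_congr rfl
    intro j _
    congr 1
    ring
end
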